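/- arXiv:2307.09140 — 3 statements merged into one kernel-verified Lean document; each statement's English description precedes it below -/
import Mathlib

section
/- The Dirichlet convolution of κ_x with σ_y equals the Dirichlet convolution of κ_y with σ_x: for all n ≥ 1, Σ_{d|n} κ_x(d)·σ_y(n/d) = Σ_{d|n} κ_y(d)·σ_x(n/d). -/
open Finset

/-- Recursive divisor function: κ_x(n) = n^x + Σ_{d|n, d<n} κ_x(d). -/
noncomputable def kappa (x : ℂ) (n : ℕ) : ℂ :=
  (n : ℂ) ^ x + ∑ d ∈ n.properDivisors.attach, kappa x d.1
termination_by n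
decreasing_by exact (Nat.mem_properDivisors.mp d.2).2

/-- Number of ordered factorizations: K(n) = ε(n) + Σ_{d|n, d<n} K(d). -/
def Kfac (n : ℕ) : ℕ :=
  (if n = 1 then 1 else 0) + ∑ d ∈ n.properDivisors.attach, Kfac d.1
termination_by n
decreasing_by exact (Nat.mem_properDivisors.mp d.2).2

/-- Divisor power sum σ_x(n) = Σ_{d|n} d^x. -/
noncomputable def sigmaC (x : ℂ) (n : ℕ) : ℂ := ∑ d ∈ n.divisors, (d : ℂ) ^ x

/-- Jordan's totient J_x = μ * id_x. -/
noncomputable def jordan (x : ℂ) (n : ℕ) : ℂ :=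
  ∑ d ∈ n.divisors, (ArithmeticFunction.moebius d : ℂ) * ((n / d : ℕ) : ℂ) ^ x

open ArithmeticFunction

noncomputable def Kf (x : ℂ) : ArithmeticFunction ℂ :=
  ⟨fun n => if n = 0 then 0 else kappa x n, by simp⟩

noncomputable def Pf (x : ℂ) : ArithmeticFunction ℂ :=
  ⟨fun n => if n = 0 then 0 else (n : ℂ) ^ x, by simp⟩

noncomputable def Zf : ArithmeticFunction ℂ :=
  ⟨fun n => if n = 0 then 0 else 1, by simp⟩

lemma Kf_apply {x : ℂ} {n : ℕ} (hn : n ≠ 0) : Kf x n = kappa x n := by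
  simp [Kf, hn]

lemma Pf_apply {x : ℂ} {n : ℕ} (hn : n ≠ 0) : Pf x n = (n : ℂ) ^ x := by
  simp [Pf, hn]

lemma mul_apply_divisors (f g : ArithmeticFunction ℂ) (n : ℕ) :
    (f * g) n = ∑ d ∈ n.divisors, f d * g (n / d) := by
  rw [ArithmeticFunction.mul_apply]
  exact Nat.sum_divisorsAntidiagonal (fun a b => f a * g b)

lemma sum_kappa (x : ℂ) {n : ℕ} (hn : n ≠ 0) :
    ∑ d ∈ n.divisors, kappa x d = 2 * kappa x n - (n : ℂ) ^ x := by
  rw [← Nat.cons_self_properDivisors hn, Finset.sum_cons]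
  have h : ∑ d ∈ n.properDivisors, kappa x d
      = ∑ d ∈ n.properDivisors.attach, kappa x d.1 := (Finset.sum_attach _ _).symm
  rw [h, kappa]
  ring

lemma zf_mul_apply (f : ArithmeticFunction ℂ) (n : ℕ) :
    (Zf * f) n = ∑ d ∈ n.divisors, f d := by
  rw [mul_apply_divisors]
  have h : ∑ d ∈ n.divisors, Zf d * f (n / d) = ∑ d ∈ n.divisors, f (n / d) := by
    refine Finset.sum_congr rfl fun d hd => ?_
    have : d ≠ 0 := ne_of_gt (Nat.pos_of_mem_divisors hd)
    simp [Zf, this]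
  rw [h, Nat.sum_div_divisors]

lemma Sg_eq (y : ℂ) (n : ℕ) : (Pf y * Zf) n = sigmaC y n := by
  rcases eq_or_ne n 0 with rfl | hn
  · simp [sigmaC]
  rw [mul_apply_divisors, sigmaC]
  refine Finset.sum_congr rfl fun d hd => ?_
  obtain ⟨hd1, hd2⟩ := Nat.mem_divisors.mp hd
  have hdne : d ≠ 0 := ne_of_gt (Nat.pos_of_mem_divisors hd)
  have hq : n / d ≠ 0 :=
    ne_of_gt (Nat.div_pos (Nat.le_of_dvd (Nat.pos_of_ne_zero hn) hd1)
      (Nat.pos_of_ne_zero hdne))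
  simp [Pf_apply hdne, Zf, hq]

lemma zeta_mul_Kf (x : ℂ) : Zf * Kf x + Pf x = Kf x + Kf x := by
  ext n
  rcases eq_or_ne n 0 with rfl | hn
  · simp
  rw [ArithmeticFunction.add_apply, ArithmeticFunction.add_apply, zf_mul_apply]
  have h : ∑ d ∈ n.divisors, (Kf x) d = ∑ d ∈ n.divisors, kappa x d :=
    Finset.sum_congr rfl fun d hd => Kf_apply (ne_of_gt (Nat.pos_of_mem_divisors hd))
  rw [h, sum_kappa x hn, Kf_apply hn, Pf_apply hn]
  ring

lemma key_rec (x y : ℂ) {n : ℕ} (hn : n ≠ 0) :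
    (Kf x * (Pf y * Zf)) n =
      (Pf x * (Pf y * Zf)) n + ∑ d ∈ n.properDivisors, (Kf x * (Pf y * Zf)) d := by
  set F := Kf x * (Pf y * Zf) with hF
  have h2 : Zf * F + Pf x * (Pf y * Zf) = F + F := by
    rw [hF, ← mul_assoc, ← add_mul, zeta_mul_Kf, add_mul]
  have h3 := congrArg (fun g : ArithmeticFunction ℂ => g n) h2
  simp only [ArithmeticFunction.add_apply] at h3
  rw [zf_mul_apply, ← Nat.cons_self_properDivisors hn, Finset.sum_cons] at h3
  have h4 : F n + (∑ d ∈ n.properDivisors, F d + (Pf x * (Pf y * Zf)) n) = F n + F n := by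
    rw [← add_assoc]; exact h3
  have h5 := add_left_cancel h4
  rw [← h5, add_comm]

lemma symm_G (x y : ℂ) : Pf x * (Pf y * Zf) = Pf y * (Pf x * Zf) := by
  ring

lemma main_eq (x y : ℂ) : ∀ n : ℕ, (Kf x * (Pf y * Zf)) n = (Kf y * (Pf x * Zf)) n := by
  intro n
  induction n using Nat.strong_induction_on with
  | _ n ih =>
    rcases eq_or_ne n 0 with rfl | hn
    · simp
    rw [key_rec x y hn, key_rec y x hn, symm_G]
    congr 1
    exact Finset.sum_congr rfl fun d hd => ih d (Nat.mem_properDivisors.mp hd).2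

theorem stmt2 (x y : ℂ) (n : ℕ) (hn : 1 ≤ n) :
    ∑ d ∈ n.divisors, kappa x d * sigmaC y (n / d) =
      ∑ d ∈ n.divisors, kappa y d * sigmaC x (n / d) := by
  have h := main_eq x y n
  rw [mul_apply_divisors, mul_apply_divisors] at h
  have conv : ∀ z w : ℂ, ∑ d ∈ n.divisors, (Kf z) d * (Pf w * Zf) (n / d)
      = ∑ d ∈ n.divisors, kappa z d * sigmaC w (n / d) := by
    intro z w
    refine Finset.sum_congr rfl fun d hd => ?_
    rw [Kf_apply (ne_of_gt (Nat.pos_of_mem_divisors hd)), Sg_eq]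
  rw [conv, conv] at h
  exact h
end

section
/- κ_1 equals the Dirichlet convolution of the Euler totient function φ with κ_0: for all n, κ_1(n) = Σ_{d|n} φ(d)·κ_0(n/d). -/
open Finset

open ArithmeticFunction
open scoped ArithmeticFunction.zeta

/-- κ_0 as an arithmetic function. -/
noncomputable def K0 : ArithmeticFunction ℂ :=
  ⟨fun n => if n = 0 then 0 else kappa 0 n, by simp⟩

lemma K0_apply {n : ℕ} (hn : n ≠ 0) : K0 n = kappa 0 n := by
  simp [K0, hn]

lemma kappa0_rec (n : ℕ) :
    kappa 0 n = 1 + ∑ d ∈ n.properDivisors, kappa 0 d := by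
  rw [kappa]
  rw [Complex.cpow_zero, ← Finset.sum_attach n.properDivisors (fun d => kappa 0 d)]

lemma kappa1_rec (n : ℕ) :
    kappa 1 n = (n : ℂ) + ∑ d ∈ n.properDivisors, kappa 1 d := by
  rw [kappa]
  rw [Complex.cpow_one, ← Finset.sum_attach n.properDivisors (fun d => kappa 1 d)]

/-- Euler's totient as a complex arithmetic function. -/
noncomputable def Phi : ArithmeticFunction ℂ := ⟨fun n => (Nat.totient n : ℂ), by simp⟩

lemma Phi_apply (n : ℕ) : Phi n = (Nat.totient n : ℂ) := rfl

lemma zeta_K0 : (ζ : ArithmeticFunction ℂ) * K0 + ζ = K0 + K0 := by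
  ext n
  rcases eq_or_ne n 0 with rfl | hn
  · simp
  · rw [ArithmeticFunction.add_apply, coe_zeta_mul_apply]
    rw [← Nat.insert_self_properDivisors hn, Finset.sum_insert Nat.self_notMem_properDivisors]
    have h : ∀ d ∈ n.properDivisors, K0 d = kappa 0 d := by
      intro d hd
      exact K0_apply (Nat.pos_of_mem_properDivisors hd).ne'
    rw [Finset.sum_congr rfl h, K0_apply hn]
    have hk := kappa0_rec n
    simp only [ArithmeticFunction.add_apply, K0_apply hn,
      natCoe_apply, zeta_apply, hn, if_false, Nat.cast_one]
    rw [show n.properDivisors.sum (kappa 0) = ∑ d ∈ n.properDivisors, kappa 0 d from rfl]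
    linear_combination -hk

noncomputable def F : ArithmeticFunction ℂ := Phi * K0

lemma totient_zeta_apply (n : ℕ) : (Phi * ζ) n = (n : ℂ) := by
  rw [coe_mul_zeta_apply]
  have : ∑ i ∈ n.divisors, Phi i = ((∑ i ∈ n.divisors, Nat.totient i : ℕ) : ℂ) := by
    push_cast
    rfl
  rw [this, Nat.sum_totient]

lemma F_rec (n : ℕ) (hn : n ≠ 0) :
    F n = (n : ℂ) + ∑ d ∈ n.properDivisors, F d := by
  have key : ((ζ : ArithmeticFunction ℂ) * F) n = 2 * F n - n := by
    have h2 : (ζ : ArithmeticFunction ℂ) * F + Phi * ζ = F + F := by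
      rw [F, show (ζ : ArithmeticFunction ℂ) * (Phi * K0) + Phi * ζ
          = Phi * ((ζ : ArithmeticFunction ℂ) * K0 + ζ) by ring, zeta_K0]
      ring
    have h3 := congrArg (fun g : ArithmeticFunction ℂ => g n) h2
    simp only [ArithmeticFunction.add_apply, totient_zeta_apply n] at h3
    linear_combination h3
  rw [coe_zeta_mul_apply, ← Nat.insert_self_properDivisors hn,
    Finset.sum_insert Nat.self_notMem_properDivisors] at key
  linear_combination -key

lemma kappa1_eq_F : ∀ n : ℕ, n ≠ 0 → kappa 1 n = F n := by
  intro n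
  induction n using Nat.strong_induction_on with
  | _ n ih =>
    intro hn
    rw [kappa1_rec, F_rec n hn]
    congr 1
    apply Finset.sum_congr rfl
    intro d hd
    exact ih d (Nat.mem_properDivisors.mp hd).2 (Nat.pos_of_mem_properDivisors hd).ne'

theorem stmt5 (n : ℕ) (hn : 0 < n) :
    kappa 1 n = ∑ d ∈ n.divisors, (Nat.totient d : ℂ) * kappa 0 (n / d) := by
  rw [kappa1_eq_F n hn.ne', F, mul_apply,
    Nat.sum_divisorsAntidiagonal (fun d e => Phi d * K0 e)]
  apply Finset.sum_congr rfl
  intro d hd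
  obtain ⟨hdvd, hn0⟩ := Nat.mem_divisors.mp hd
  have hdpos : 0 < d := Nat.pos_of_mem_divisors hd
  have : n / d ≠ 0 := (Nat.div_pos (Nat.le_of_dvd hn hdvd) hdpos).ne'
  rw [K0_apply this, Phi_apply]
end

section
/- For all n ≥ 1, K(n) = Σ_{d|n} μ(d)·κ_0(n/d), i.e., K = μ * κ_0. -/
open Finset

lemma kappa_eq (n : ℕ) (hn : 0 < n) :
    kappa 0 n = 2 * (Kfac n : ℂ) - (if n = 1 then 1 else 0) := by
  induction n using Nat.strong_induction_on with
  | _ n ih =>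
    rw [kappa, Kfac]
    rcases eq_or_lt_of_le (show 1 ≤ n from hn) with h1 | h1
    · have : n = 1 := h1.symm
      subst this
      norm_num [Finset.sum_attach]
    · have hne : n ≠ 1 := by omega
      rw [Complex.cpow_zero, if_neg hne]
      push_cast
      rw [if_neg hne]
      have : ∀ d ∈ n.properDivisors.attach, kappa 0 d.1
          = 2 * (Kfac d.1 : ℂ) - (if d.1 = 1 then 1 else 0) := by
        intro d hd
        exact ih d.1 (Nat.mem_properDivisors.mp d.2).2
          (Nat.pos_of_mem_properDivisors d.2)
      rw [Finset.sum_congr rfl this, Finset.sum_sub_distrib]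
      have h1mem : (1 : ℕ) ∈ n.properDivisors :=
        Nat.one_mem_properDivisors_iff_one_lt.mpr h1
      have hsum1 : ∑ d ∈ n.properDivisors.attach, (if d.1 = 1 then (1:ℂ) else 0) = 1 := by
        rw [Finset.sum_attach n.properDivisors (fun d => if d = 1 then (1:ℂ) else 0)]
        rw [Finset.sum_ite_eq' n.properDivisors 1 (fun _ => (1:ℂ))]
        simp [h1mem]
      rw [hsum1, ← Finset.mul_sum]
      ring

lemma sum_Kfac (n : ℕ) (hn : 0 < n) :
    ∑ d ∈ n.divisors, (Kfac d : ℂ) = kappa 0 n := by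
  rw [kappa_eq n hn, ← Nat.cons_self_properDivisors hn.ne', Finset.sum_cons]
  have : ∑ d ∈ n.properDivisors, (Kfac d : ℂ) = (Kfac n : ℂ) - (if n = 1 then 1 else 0) := by
    conv_rhs => rw [Kfac]
    push_cast
    rw [Finset.sum_attach n.properDivisors (fun d => (Kfac d : ℂ))]
    ring
  rw [this]; ring

theorem stmt14 (n : ℕ) (hn : 1 ≤ n) :
    (Kfac n : ℂ) = ∑ d ∈ n.divisors, (ArithmeticFunction.moebius d : ℂ) * kappa 0 (n / d) := by
  have h := (ArithmeticFunction.sum_eq_iff_sum_mul_moebius_eq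
    (f := fun d => (Kfac d : ℂ)) (g := kappa 0)).mp (fun m hm => sum_Kfac m hm) n hn
  rw [← Nat.sum_divisorsAntidiagonal (fun x y => (ArithmeticFunction.moebius x : ℂ) * kappa 0 y)]
  exact h.symm
end
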